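/- Let G be a circular arc graph on n vertices with maximum degree Δ. If Δ < ⌊n(α−1)/(2α)⌋ for some integer α ≥ 2, then the boxicity of G is at most α; i.e., G is the intersection of α interval graphs on the same vertex set. -/

import Mathlib

noncomputable section

/-- The circle of circumference `2π`, as `ℝ / 2πℤ`. -/
abbrev Circle2pi := AddCircle (2 * Real.pi)

/-- The closed arc traversed clockwise (decreasing angle) from the angle `s`
(its left endpoint) through angular length `ℓ`; its right endpoint is `s - ℓ`. -/
def arcSet (s ℓ : ℝ) : Set Circle2pi :=
  (fun t : ℝ => ((s - t : ℝ) : Circle2pi)) '' Set.Icc 0 ℓ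

/-- `f` is a circular-arc representation of `G`: each vertex gets a (start angle, length)
pair describing a proper closed arc, and distinct vertices are adjacent iff
their arcs intersect. -/
def IsCARep {V : Type*} (G : SimpleGraph V) (f : V → ℝ × ℝ) : Prop :=
  (∀ v, 0 < (f v).2 ∧ (f v).2 < 2 * Real.pi) ∧
  ∀ u v, u ≠ v →
    (G.Adj u v ↔ (arcSet (f u).1 (f u).2 ∩ arcSet (f v).1 (f v).2).Nonempty)

/-- `box(G) ≤ k`: `G` is the intersection of `k` interval graphs on `V`. -/
def BoxicityLE {V : Type*} (G : SimpleGraph V) (k : ℕ) : Prop :=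
  ∃ I : Fin k → V → Set ℝ,
    (∀ i v, ∃ a b : ℝ, a ≤ b ∧ I i v = Set.Icc a b) ∧
    ∀ u v : V, u ≠ v → (G.Adj u v ↔ ∀ i, (I i u ∩ I i v).Nonempty)

/-- Reflection of the circle across the line through the center at angle `θ`. -/
def reflMap (θ : ℝ) : Circle2pi → Circle2pi := fun p => ((2 * θ : ℝ) : Circle2pi) - p

/-- The open sector `S_k` (numbered anticlockwise from the positive x-axis):
points of the circle with angle strictly between `πk/α` and `π(k+1)/α`. -/
def sector (α : ℕ) (k : ℤ) : Set Circle2pi :=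
  (fun t : ℝ => (t : Circle2pi)) '' Set.Ioo (Real.pi * k / α) (Real.pi * (k + 1) / α)

/-- Signed coordinate of a point of the circle when orthogonally projected onto the
line through the center at angle `θ` (identified with ℝ). -/
def projCoord (θ : ℝ) : Circle2pi → ℝ :=
  Function.Periodic.lift
    (f := fun x : ℝ => Real.cos (x - θ))
    (fun x => by simp only []; rw [show x + 2 * Real.pi - θ = (x - θ) + 2 * Real.pi by ring,
      Real.cos_add_two_pi])


section Aux
open Real Set

lemma circle_eq_iff (x y : ℝ) : (x : Circle2pi) = (y : Circle2pi) ↔ ∃ k : ℤ, x - y = k * (2*π) := by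
  rw [QuotientAddGroup.eq_iff_sub_mem]
  constructor
  · intro h
    rcases AddSubgroup.mem_zmultiples_iff.1 h with ⟨k, hk⟩
    exact ⟨k, by rw [← hk]; simp [zsmul_eq_mul]⟩
  · rintro ⟨k, hk⟩
    exact AddSubgroup.mem_zmultiples_iff.2 ⟨k, by rw [zsmul_eq_mul, ← hk]⟩

lemma tim_shift (x : ℝ) (k : ℤ) :
    toIcoMod Real.two_pi_pos 0 (x + k * (2*π)) = toIcoMod Real.two_pi_pos 0 x := by
  rw [show (k:ℝ) * (2*π) = k • (2*π) by simp [zsmul_eq_mul], toIcoMod_add_zsmul]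

/-- ccw distance from y to z on the circle, in [0, 2π) -/
def dd (y z : ℝ) : ℝ := toIcoMod Real.two_pi_pos 0 (z - y)

lemma dd_nonneg (y z : ℝ) : 0 ≤ dd y z := (toIcoMod_mem_Ico Real.two_pi_pos 0 _).1
lemma dd_lt (y z : ℝ) : dd y z < 2*π := by
  have := (toIcoMod_mem_Ico Real.two_pi_pos 0 (z-y)).2; simpa [dd] using this
lemma dd_sub (y z : ℝ) : ∃ k : ℤ, dd y z = z - y + k * (2*π) := by
  have h := self_sub_toIcoMod Real.two_pi_pos 0 (z - y)
  refine ⟨-(toIcoDiv Real.two_pi_pos 0 (z-y)), ?_⟩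
  rw [dd]; push_cast [zsmul_eq_mul] at h ⊢; linarith
lemma dd_eq_self {y z : ℝ} (h0 : 0 ≤ z - y) (h1 : z - y < 2*π) : dd y z = z - y := by
  rw [dd, toIcoMod_eq_self]; exact ⟨h0, by simpa using h1⟩
lemma dd_eq_self' {y z : ℝ} (h0 : 0 ≤ z - y + 2*π) (h1 : z - y < 0) : dd y z = z - y + 2*π := by
  have : dd y z = toIcoMod Real.two_pi_pos 0 ((z - y + 2*π) + (-1 : ℤ) * (2*π)) := by
    rw [dd]; norm_num
  rw [this, tim_shift, toIcoMod_eq_self]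
  exact ⟨h0, by simpa using h1⟩
lemma dd_of_shift {y z w : ℝ} (k : ℤ) (hw : w = z - y + k * (2*π)) (h0 : 0 ≤ w) (h1 : w < 2*π) :
    dd y z = w := by
  have : dd y z = toIcoMod Real.two_pi_pos 0 (w + (-k : ℤ) * (2*π)) := by
    rw [dd]; congr 1; push_cast; linarith
  rw [this, tim_shift, toIcoMod_eq_self]
  exact ⟨h0, by simpa using h1⟩
lemma dd_congr {y z y' z' : ℝ} (hy : ∃ k : ℤ, y' - y = k * (2*π)) (hz : ∃ k : ℤ, z' - z = k * (2*π)) :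
    dd y' z' = dd y z := by
  rcases hy with ⟨a, ha⟩; rcases hz with ⟨b, hb⟩
  have h : z' - y' = (z - y) + (b - a : ℤ) * (2*π) := by push_cast; linarith
  rw [dd, h, tim_shift]; rfl

/-- membership of a real's class in an arc -/
lemma mem_arcSet_iff {s ℓ : ℝ} (h0 : 0 ≤ ℓ) (h2 : ℓ < 2*π) (y : ℝ) :
    ((y : ℝ) : Circle2pi) ∈ arcSet s ℓ ↔ dd y s ≤ ℓ := by
  constructor
  · rintro ⟨t, ⟨ht0, ht1⟩, ht⟩
    change ((s - t : ℝ) : Circle2pi) = (y : Circle2pi) at ht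
    rcases (circle_eq_iff _ _).1 ht with ⟨k, hk⟩
    have hd : dd y s = t := dd_of_shift (-k) (by push_cast; linarith) ht0 (lt_of_le_of_lt ht1 h2)
    linarith
  · intro h
    refine ⟨dd y s, ⟨dd_nonneg y s, h⟩, ?_⟩
    rcases dd_sub y s with ⟨k, hk⟩
    change ((s - dd y s : ℝ) : Circle2pi) = (y : Circle2pi)
    rw [circle_eq_iff]
    exact ⟨-k, by push_cast; linarith⟩

lemma arcSet_inter_iff {s1 l1 s2 l2 : ℝ} (h10 : 0 ≤ l1) (h12 : l1 < 2*π) (h20 : 0 ≤ l2) (h22 : l2 < 2*π) :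
    (arcSet s1 l1 ∩ arcSet s2 l2).Nonempty ↔ dd s2 s1 ≤ l1 ∨ dd s1 s2 ≤ l2 := by
  constructor
  · rintro ⟨z, ⟨t, ⟨ht0, ht1⟩, ht⟩, ⟨t', ⟨ht0', ht1'⟩, ht'⟩⟩
    change ((s1 - t : ℝ) : Circle2pi) = z at ht
    change ((s2 - t' : ℝ) : Circle2pi) = z at ht'
    rcases (circle_eq_iff _ _).1 (ht.trans ht'.symm) with ⟨k, hk⟩
    rcases le_or_gt t' t with hle | hlt
    · left
      have hd : dd s2 s1 = t - t' :=
        dd_of_shift (-k) (by push_cast; linarith) (by linarith) (by linarith)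
      linarith
    · right
      have hd : dd s1 s2 = t' - t :=
        dd_of_shift k (by push_cast; linarith) (by linarith) (by linarith)
      linarith
  · intro h
    rcases h with h | h
    · exact ⟨((s2 : ℝ) : Circle2pi), (mem_arcSet_iff h10 h12 s2).2 h,
        ⟨0, by simp [h20], by norm_num⟩⟩
    · exact ⟨((s1 : ℝ) : Circle2pi), ⟨0, by simp [h10], by norm_num⟩,
        (mem_arcSet_iff h20 h22 s1).2 h⟩

lemma dd_cases (a x b : ℝ) : dd a x + dd x b = dd a b ∨ dd a x + dd x b = dd a b + 2*π := by
  rcases dd_sub a x with ⟨k1, h1⟩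
  rcases dd_sub x b with ⟨k2, h2⟩
  rcases dd_sub a b with ⟨k3, h3⟩
  have key : dd a x + dd x b = dd a b + ((k1 + k2 - k3 : ℤ) : ℝ) * (2*π) := by push_cast; linarith
  have b1 := dd_nonneg a x; have b2 := dd_nonneg x b; have b3 := dd_nonneg a b
  have c1 := dd_lt a x; have c2 := dd_lt x b; have c3 := dd_lt a b
  have hpi := Real.pi_pos
  have l0 : (-1 : ℝ) < ((k1 + k2 - k3 : ℤ) : ℝ) := by nlinarith
  have l2 : ((k1 + k2 - k3 : ℤ) : ℝ) < 2 := by nlinarith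
  have l0' : (-1 : ℤ) < k1 + k2 - k3 := by exact_mod_cast l0
  have l2' : (k1 + k2 - k3 : ℤ) < 2 := by exact_mod_cast l2
  have : k1 + k2 - k3 = 0 ∨ k1 + k2 - k3 = 1 := by omega
  rcases this with h | h
  · left; rw [h] at key; simpa using key
  · right; rw [h] at key; simpa using key

lemma dd_add_dd {a x b : ℝ} (hax : dd a x ≤ dd a b) : dd a x + dd x b = dd a b := by
  rcases dd_cases a x b with h | h
  · exact h
  · exfalso; have := dd_lt x b; linarith

lemma dd_switch (a x b : ℝ) : dd a x ≤ dd a b ↔ dd x b ≤ dd a b := by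
  constructor
  · intro h; have := dd_add_dd h; have := dd_nonneg a x; linarith
  · intro h
    rcases dd_cases a x b with h' | h'
    · have := dd_nonneg x b; linarith
    · exfalso; have := dd_lt a x; linarith

lemma dd_zero_iff {y z : ℝ} : dd y z = 0 ↔ ∃ k : ℤ, z - y = k * (2*π) := by
  constructor
  · intro h; rcases dd_sub y z with ⟨k, hk⟩; exact ⟨-k, by push_cast; linarith⟩
  · rintro ⟨k, hk⟩; exact dd_of_shift (-k) (by push_cast; linarith) le_rfl Real.two_pi_pos

lemma dd_antisymm {y z : ℝ} (h : dd y z ≠ 0) : dd y z + dd z y = 2*π := by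
  rcases dd_cases y z y with h' | h'
  · exfalso
    have h0 : dd y y = 0 := by
      have := dd_eq_self (y:=y) (z:=y) (by norm_num) (by simpa using Real.two_pi_pos)
      simpa using this
    have := dd_nonneg z y
    have h1 : dd z y = 0 := by rw [h0] at h'; linarith [dd_nonneg y z]
    rcases dd_zero_iff.1 h1 with ⟨k, hk⟩
    exact h (dd_zero_iff.2 ⟨-k, by push_cast; linarith⟩)
  · have h0 : dd y y = 0 := by
      have := dd_eq_self (y:=y) (z:=y) (by norm_num) (by simpa using Real.two_pi_pos)
      simpa using this
    rw [h0] at h'; linarith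

/-- characterization of cyclic betweenness for distinct points in [0,2π) -/
lemma dd_le_char {a x b : ℝ} (ha : 0 ≤ a) (ha2 : a < 2*π) (hx : 0 ≤ x) (hx2 : x < 2*π)
    (hb : 0 ≤ b) (hb2 : b < 2*π) (hax : a ≠ x) (hab : a ≠ b) (hxb : x ≠ b) :
    (dd x b ≤ dd a b ↔ ((a<x∧x<b) ∨ (x<b∧b<a) ∨ (b<a∧a<x))) := by
  have pi_pos := Real.pi_pos
  rcases lt_or_gt_of_ne hax with h1|h1 <;> rcases lt_or_gt_of_ne hab with h2|h2 <;>
    rcases lt_or_gt_of_ne hxb with h3|h3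
  · -- a<x, a<b, x<b
    rw [dd_eq_self (by linarith) (by linarith), dd_eq_self (by linarith) (by linarith)]
    constructor
    · intro _; exact Or.inl ⟨h1, h3⟩
    · intro _; linarith
  · -- a<x, a<b, x>b  (so b<x, a<b<x)
    rw [dd_eq_self' (by linarith) (by linarith), dd_eq_self (by linarith) (by linarith)]
    constructor
    · intro h; linarith
    · rintro (⟨_,_⟩|⟨_,_⟩|⟨_,_⟩) <;> linarith
  · -- a<x, b<a, x<b : impossible? b<a<x<b
    exfalso; linarith
  · -- a<x, b<a, b<x
    rw [dd_eq_self' (by linarith) (by linarith), dd_eq_self' (by linarith) (by linarith)]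
    constructor
    · intro _; exact Or.inr (Or.inr ⟨h2, h1⟩)
    · intro _; linarith
  · -- x<a, a<b, x<b
    rw [dd_eq_self (by linarith) (by linarith), dd_eq_self (by linarith) (by linarith)]
    constructor
    · intro h; linarith
    · rintro (⟨_,_⟩|⟨_,_⟩|⟨_,_⟩) <;> linarith
  · -- x<a, a<b, b<x : impossible
    exfalso; linarith
  · -- x<a, b<a, x<b
    rw [dd_eq_self (by linarith) (by linarith), dd_eq_self' (by linarith) (by linarith)]
    constructor
    · intro _; exact Or.inr (Or.inl ⟨h3, h2⟩)
    · intro _; linarith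
  · -- x<a, b<a, b<x
    rw [dd_eq_self' (by linarith) (by linarith), dd_eq_self' (by linarith) (by linarith)]
    constructor
    · intro h; linarith
    · rintro (⟨_,_⟩|⟨_,_⟩|⟨_,_⟩) <;> linarith

lemma dd_le_transfer {a x b a' x' b' : ℝ}
    (ha : 0 ≤ a) (ha2 : a < 2*π) (hx : 0 ≤ x) (hx2 : x < 2*π) (hb : 0 ≤ b) (hb2 : b < 2*π)
    (ha' : 0 ≤ a') (ha2' : a' < 2*π) (hx' : 0 ≤ x') (hx2' : x' < 2*π) (hb' : 0 ≤ b') (hb2' : b' < 2*π)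
    (hax : a ≠ x) (hab : a ≠ b) (hxb : x ≠ b)
    (iax : a < x ↔ a' < x') (ixa : x < a ↔ x' < a')
    (iab : a < b ↔ a' < b') (iba : b < a ↔ b' < a')
    (ixb : x < b ↔ x' < b') (ibx : b < x ↔ b' < x') :
    (dd x b ≤ dd a b ↔ dd x' b' ≤ dd a' b') := by
  have hax' : a' ≠ x' := by
    rcases lt_or_gt_of_ne hax with h|h
    · exact ne_of_lt (iax.1 h)
    · exact (ne_of_lt (ixa.1 h)).symm
  have hab' : a' ≠ b' := by
    rcases lt_or_gt_of_ne hab with h|h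
    · exact ne_of_lt (iab.1 h)
    · exact (ne_of_lt (iba.1 h)).symm
  have hxb' : x' ≠ b' := by
    rcases lt_or_gt_of_ne hxb with h|h
    · exact ne_of_lt (ixb.1 h)
    · exact (ne_of_lt (ibx.1 h)).symm
  rw [dd_le_char ha ha2 hx hx2 hb hb2 hax hab hxb,
      dd_le_char ha' ha2' hx' hx2' hb' hb2' hax' hab' hxb']
  constructor
  · rintro (⟨p,q⟩|⟨p,q⟩|⟨p,q⟩)
    · exact Or.inl ⟨iax.1 p, ixb.1 q⟩
    · exact Or.inr (Or.inl ⟨ixb.1 p, iba.1 q⟩)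
    · exact Or.inr (Or.inr ⟨iba.1 p, iax.1 q⟩)
  · rintro (⟨p,q⟩|⟨p,q⟩|⟨p,q⟩)
    · exact Or.inl ⟨iax.2 p, ixb.2 q⟩
    · exact Or.inr (Or.inl ⟨ixb.2 p, iba.2 q⟩)
    · exact Or.inr (Or.inr ⟨iba.2 p, iax.2 q⟩)

/-- can choose a point in an interval avoiding countably many shifted lattices -/
lemma exists_avoid (S : Finset ℝ) {a b : ℝ} (h : a < b) :
    ∃ x, x ∈ Ioo a b ∧ ∀ y ∈ S, ∀ k : ℤ, x - y ≠ k * (2*π) := by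
  by_contra hc
  push_neg at hc
  have hsub : Ioo a b ⊆ ⋃ y ∈ (S : Set ℝ), Set.range (fun k : ℤ => y + k * (2*π)) := by
    intro x hx
    rcases hc x hx with ⟨y, hy, k, hk⟩
    have : x ∈ Set.range (fun k : ℤ => y + k * (2*π)) := ⟨k, by simp only []; linarith⟩
    exact Set.mem_biUnion hy this
  have hcnt : (⋃ y ∈ (S : Set ℝ), Set.range (fun k : ℤ => y + k * (2*π))).Countable :=
    Set.Countable.biUnion S.countable_toSet (fun y _ => Set.countable_range _)
  have h0 : MeasureTheory.volume (Ioo a b) = 0 :=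
    MeasureTheory.measure_mono_null hsub (hcnt.measure_zero _)
  rw [Real.volume_Ioo] at h0
  rw [ENNReal.ofReal_eq_zero] at h0
  linarith

lemma exists_perturb {T : Type*} [DecidableEq T] (F : Finset T) (lo hi : T → ℝ) (h : ∀ t, lo t < hi t) :
    ∃ g : T → ℝ, (∀ t, g t ∈ Ioo (lo t) (hi t)) ∧
      (∀ t ∈ F, ∀ t' ∈ F, t ≠ t' → ∀ k : ℤ, g t - g t' ≠ k * (2*π)) := by
  induction F using Finset.induction_on with
  | empty =>
      exact ⟨fun t => (lo t + hi t)/2, fun t => ⟨by linarith [h t], by linarith [h t]⟩,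
        by simp⟩
  | @insert t F htF ih =>
      rcases ih with ⟨g, hg1, hg2⟩
      rcases exists_avoid (F.image g) (h t) with ⟨x, hx1, hx2⟩
      refine ⟨Function.update g t x, ?_, ?_⟩
      · intro t'
        rcases eq_or_ne t' t with rfl | hne
        · simpa using hx1
        · simpa [Function.update_of_ne hne] using hg1 t'
      · intro u hu u' hu' huu' k
        by_cases e1 : u = t <;> by_cases e2 : u' = t
        · exact absurd (e1.trans e2.symm) huu'
        · have hu'F : u' ∈ F := by
            rcases Finset.mem_insert.1 hu' with h | h
            · exact absurd h e2
            · exact h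
          rw [e1, Function.update_self, Function.update_of_ne e2]
          exact hx2 _ (Finset.mem_image_of_mem g hu'F) k
        · have huF : u ∈ F := by
            rcases Finset.mem_insert.1 hu with h | h
            · exact absurd h e1
            · exact h
          rw [e2, Function.update_self, Function.update_of_ne e1]
          intro hk
          exact hx2 _ (Finset.mem_image_of_mem g huF) (-k) (by push_cast; linarith)
        · have huF : u ∈ F := by
            rcases Finset.mem_insert.1 hu with h | h
            · exact absurd h e1
            · exact h
          have hu'F : u' ∈ F := by
            rcases Finset.mem_insert.1 hu' with h | h
            · exact absurd h e2
            · exact h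
          rw [Function.update_of_ne e1, Function.update_of_ne e2]
          exact hg2 u huF u' hu'F huu' k

def tokPos {V : Type*} (f : V → ℝ × ℝ) (t : V × Bool) : ℝ :=
  if t.2 then (f t.1).1 else (f t.1).1 - (f t.1).2

def GoodRep {V : Type*} (G : SimpleGraph V) (f : V → ℝ × ℝ) : Prop :=
  IsCARep G f ∧ ∀ t t' : V × Bool, t ≠ t' → ∀ k : ℤ, tokPos f t - tokPos f t' ≠ k * (2*π)

lemma arcSet_mono {s ℓ s' ℓ' a : ℝ} (ha : 0 ≤ a) (hs : s' = s + a) (hl : ℓ + a ≤ ℓ') :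
    arcSet s ℓ ⊆ arcSet s' ℓ' := by
  rintro z ⟨t, ⟨t0, t1⟩, rfl⟩
  refine ⟨t + a, ⟨by linarith, by linarith⟩, ?_⟩
  have : s' - (t + a) = s - t := by rw [hs]; ring
  simp only [this]

lemma phase1 {V : Type*} [Fintype V] [Nonempty V] (G : SimpleGraph V) (f : V → ℝ × ℝ)
    (hf : IsCARep G f) : ∃ f₂ : V → ℝ × ℝ, GoodRep G f₂ := by
  classical
  obtain ⟨hlen, hadj⟩ := hf
  set marg : V × V → ℝ := fun p =>
    min (dd (f p.2).1 (f p.1).1 - (f p.1).2) (dd (f p.1).1 (f p.2).1 - (f p.2).2) with hmarg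
  set pairs : Finset (V × V) := Finset.univ.filter (fun p => p.1 ≠ p.2 ∧ ¬ G.Adj p.1 p.2) with hpairs
  have margpos : ∀ p ∈ pairs, 0 < marg p := by
    intro p hp
    rw [hpairs, Finset.mem_filter] at hp
    obtain ⟨-, hne, hnadj⟩ := hp
    have h1 := (hlen p.1).1; have h2 := (hlen p.1).2
    have h3 := (hlen p.2).1; have h4 := (hlen p.2).2
    have := (hadj p.1 p.2 hne).not.1 hnadj
    rw [arcSet_inter_iff (le_of_lt h1) h2 (le_of_lt h3) h4] at this
    push_neg at this
    exact lt_min (by linarith [this.1]) (by linarith [this.2])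
  set γ : ℝ := if hne : (pairs.image marg).Nonempty then (pairs.image marg).min' hne else 1 with hγ
  have γpos : 0 < γ := by
    rw [hγ]
    split_ifs with hne
    · obtain ⟨p, hp, hpe⟩ := Finset.mem_image.1 ((pairs.image marg).min'_mem hne)
      rw [← hpe]; exact margpos p hp
    · norm_num
  have γle : ∀ u v, u ≠ v → ¬ G.Adj u v → γ ≤ marg (u, v) := by
    intro u v hne hnadj
    have hmem : (u,v) ∈ pairs := by rw [hpairs, Finset.mem_filter]; exact ⟨Finset.mem_univ _, hne, hnadj⟩
    have : marg (u,v) ∈ pairs.image marg := Finset.mem_image_of_mem _ hmem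
    rw [hγ]
    split_ifs with hne'
    · exact Finset.min'_le _ _ this
    · exact absurd ⟨_, this⟩ hne'
  obtain ⟨wmax, -, hwmax⟩ := Finset.exists_max_image (Finset.univ : Finset V) (fun v => (f v).2)
    ⟨Classical.arbitrary V, Finset.mem_univ _⟩
  set Lmax : ℝ := (f wmax).2 with hLmax
  have LmaxLT : Lmax < 2*π := (hlen wmax).2
  have Lmaxge : ∀ v, (f v).2 ≤ Lmax := fun v => hwmax v (Finset.mem_univ v)
  set δ : ℝ := min (γ/4) ((2*π - Lmax)/4) with hδdef
  have hδpos : 0 < δ := lt_min (by linarith) (by linarith)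
  have hδγ : 4*δ ≤ γ := by
    have := min_le_left (γ/4) ((2*π - Lmax)/4); rw [← hδdef] at this; linarith
  have hδL : 4*δ ≤ 2*π - Lmax := by
    have := min_le_right (γ/4) ((2*π - Lmax)/4); rw [← hδdef] at this; linarith
  obtain ⟨g, hg1, hg2⟩ := exists_perturb (Finset.univ : Finset (V × Bool))
    (fun t => if t.2 then (f t.1).1 else (f t.1).1 - (f t.1).2 - δ)
    (fun t => if t.2 then (f t.1).1 + δ else (f t.1).1 - (f t.1).2)
    (fun t => by (try dsimp only); split_ifs <;> linarith)
  refine ⟨fun v => (g (v, true), g (v, true) - g (v, false)), ⟨⟨?_, ?_⟩, ?_⟩⟩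
  · -- lengths
    intro v
    have h1 := hg1 (v, true); have h2 := hg1 (v, false)
    simp only [if_pos, if_neg, Bool.false_eq_true, not_false_iff, mem_Ioo] at h1 h2
    have hL1 := (hlen v).1
    have := Lmaxge v
    constructor
    · dsimp only; linarith [h1.1, h2.2]
    · dsimp only; linarith [h1.2, h2.1]
  · -- adjacency
    intro u v hne
    have h1u := hg1 (u, true); have h2u := hg1 (u, false)
    have h1v := hg1 (v, true); have h2v := hg1 (v, false)
    simp only [if_pos, if_neg, Bool.false_eq_true, not_false_iff, mem_Ioo] at h1u h2u h1v h2v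
    have hLu1 := (hlen u).1; have hLu2 := (hlen u).2
    have hLv1 := (hlen v).1; have hLv2 := (hlen v).2
    have hMu := Lmaxge u; have hMv := Lmaxge v
    constructor
    · intro hA
      have hold := (hadj u v hne).1 hA
      obtain ⟨z, hz1, hz2⟩ := hold
      refine ⟨z, ?_, ?_⟩
      · exact arcSet_mono (a := g (u,true) - (f u).1) (by linarith [h1u.1]) (by ring)
          (by dsimp only; linarith [h2u.2]) hz1
      · exact arcSet_mono (a := g (v,true) - (f v).1) (by linarith [h1v.1]) (by ring)
          (by dsimp only; linarith [h2v.2]) hz2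
    · intro hnew
      by_contra hnadj
      have hold := (hadj u v hne).not.1 hnadj
      rw [arcSet_inter_iff (le_of_lt hLu1) hLu2 (le_of_lt hLv1) hLv2] at hold
      push_neg at hold
      obtain ⟨holdu, holdv⟩ := hold
      have hγu : γ ≤ dd (f v).1 (f u).1 - (f u).2 :=
        le_trans (γle u v hne hnadj) (min_le_left _ _)
      have hγv : γ ≤ dd (f u).1 (f v).1 - (f v).2 :=
        le_trans (γle u v hne hnadj) (min_le_right _ _)
      have hdnz : dd (f v).1 (f u).1 ≠ 0 := by linarith
      have hanti := dd_antisymm hdnz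
      -- new distances
      have hdu : dd (g (v,true)) (g (u,true)) = dd (f v).1 (f u).1 + (g (u,true) - (f u).1) - (g (v,true) - (f v).1) := by
        obtain ⟨k, hk⟩ : ∃ k : ℤ, dd (f v).1 (f u).1 = (f u).1 - (f v).1 + k * (2*π) := by
          have h := self_sub_toIcoMod Real.two_pi_pos 0 ((f u).1 - (f v).1)
          exact ⟨-(toIcoDiv Real.two_pi_pos 0 ((f u).1 - (f v).1)), by
            push_cast [zsmul_eq_mul] at h ⊢
            have : dd (f v).1 (f u).1 = toIcoMod Real.two_pi_pos 0 ((f u).1 - (f v).1) := rfl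
            linarith [this]⟩
        refine dd_of_shift k (by linarith) (by linarith [h1u.1, h1v.2]) (by linarith [h1u.2, h1v.1])
      have hdv : dd (g (u,true)) (g (v,true)) = dd (f u).1 (f v).1 + (g (v,true) - (f v).1) - (g (u,true) - (f u).1) := by
        obtain ⟨k, hk⟩ : ∃ k : ℤ, dd (f u).1 (f v).1 = (f v).1 - (f u).1 + k * (2*π) := by
          have h := self_sub_toIcoMod Real.two_pi_pos 0 ((f v).1 - (f u).1)
          exact ⟨-(toIcoDiv Real.two_pi_pos 0 ((f v).1 - (f u).1)), by
            push_cast [zsmul_eq_mul] at h ⊢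
            have : dd (f u).1 (f v).1 = toIcoMod Real.two_pi_pos 0 ((f v).1 - (f u).1) := rfl
            linarith [this]⟩
        refine dd_of_shift k (by linarith) (by linarith [h1v.1, h1u.2]) (by linarith [h1v.2, h1u.1])
      rw [arcSet_inter_iff (by dsimp only; linarith [h1u.1, h2u.2]) (by dsimp only; linarith [h1u.2, h2u.1])
        (by dsimp only; linarith [h1v.1, h2v.2]) (by dsimp only; linarith [h1v.2, h2v.1])] at hnew
      dsimp only at hnew
      rcases hnew with h | h
      · rw [hdu] at h; linarith [h1u.2, h1v.1, h2u.1, h2u.2]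
      · rw [hdv] at h; linarith [h1v.2, h1u.1, h2v.1, h2v.2]
  · -- distinctness
    intro t t' hne k
    have e1 : tokPos (fun v => (g (v, true), g (v, true) - g (v, false))) t = g t := by
      rcases t with ⟨w, b⟩
      cases b <;> simp [tokPos]
    have e2 : tokPos (fun v => (g (v, true), g (v, true) - g (v, false))) t' = g t' := by
      rcases t' with ⟨w, b⟩
      cases b <;> simp [tokPos]
    rw [e1, e2]
    exact hg2 t (Finset.mem_univ t) t' (Finset.mem_univ t') hne k

lemma not_cong_of_small {x y : ℝ} (hne : x ≠ y) (habs : |x - y| < 2*π) :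
    ∀ k : ℤ, x - y ≠ k * (2*π) := by
  intro k hk
  have hk0 : k ≠ 0 := by rintro rfl; simp at hk; exact hne (by linarith)
  have h1 : (1:ℝ) ≤ |(k:ℝ)| := by exact_mod_cast Int.one_le_abs hk0
  have h2 : |x - y| = |(k:ℝ)| * (2*π) := by rw [hk, abs_mul]; simp [abs_of_pos Real.two_pi_pos]
  nlinarith [Real.two_pi_pos]

lemma phase2 {V : Type*} [Fintype V] [Nonempty V] (G : SimpleGraph V) (f : V → ℝ × ℝ)
    (hf : GoodRep G f) :
    ∃ f' : V → ℝ × ℝ, GoodRep G f' ∧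
      ∀ v, (f' v).2 ≤ (π / Fintype.card V) * (2 * (G.neighborSet v).ncard + 1) := by
  classical
  obtain ⟨⟨hlen, hadj⟩, hdist⟩ := hf
  set n := Fintype.card V with hn
  have hn0 : 0 < n := Fintype.card_pos
  have hnR : (0:ℝ) < n := by exact_mod_cast hn0
  set N := 2 * n with hN
  have hN0 : 0 < N := by omega
  have pi_pos := Real.pi_pos
  -- cut coordinates
  set c : V × Bool → ℝ := fun t => toIcoMod Real.two_pi_pos 0 (tokPos f t) with hc
  have c_mem : ∀ t, 0 ≤ c t ∧ c t < 2*π := by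
    intro t
    have := toIcoMod_mem_Ico Real.two_pi_pos 0 (tokPos f t)
    exact ⟨this.1, by simpa using this.2⟩
  have c_sub : ∀ t, ∃ k : ℤ, c t - tokPos f t = k * (2*π) := by
    intro t
    have h := toIcoMod_sub_self Real.two_pi_pos 0 (tokPos f t)
    exact ⟨-(toIcoDiv Real.two_pi_pos 0 (tokPos f t)), by push_cast [zsmul_eq_mul] at h ⊢; linarith⟩
  have c_inj : Function.Injective c := by
    intro t t' h
    by_contra hne
    obtain ⟨k, hk⟩ := c_sub t
    obtain ⟨k', hk'⟩ := c_sub t'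
    exact hdist t t' hne (k' - k) (by push_cast; linarith)
  -- ranks
  have hcard : (Finset.univ.image c).card = N := by
    rw [Finset.card_image_of_injective _ c_inj, Finset.card_univ, Fintype.card_prod,
      Fintype.card_bool]
    omega
  set iso := (Finset.univ.image c).orderIsoOfFin hcard with hiso
  set R : V × Bool → ℕ := fun t =>
    (iso.symm ⟨c t, Finset.mem_image_of_mem c (Finset.mem_univ t)⟩ : Fin N) with hR
  have Rmono : ∀ t t', c t < c t' ↔ R t < R t' := by
    intro t t'
    rw [hR]
    dsimp only
    rw [← Fin.lt_iff_val_lt_val, OrderIso.lt_iff_lt]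
    exact Iff.symm Subtype.mk_lt_mk
  have Rinj : ∀ t t', R t = R t' → t = t' := by
    intro t t' h
    apply c_inj
    have h2 : (iso.symm ⟨c t, _⟩ : Fin N) = (iso.symm ⟨c t', _⟩ : Fin N) := Fin.val_injective h
    have := iso.symm.injective h2
    exact congrArg Subtype.val this
  have Rlt : ∀ t, R t < N := fun t => (iso.symm _).2
  have Rsurj : ∀ m : ℕ, m < N → ∃ t, R t = m := by
    intro m hm
    have hmem := (iso ⟨m, hm⟩).2
    obtain ⟨t, -, ht⟩ := Finset.mem_image.1 hmem
    refine ⟨t, ?_⟩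
    rw [hR]
    dsimp only
    have heq : (⟨c t, Finset.mem_image_of_mem c (Finset.mem_univ t)⟩ : {x // x ∈ Finset.univ.image c}) = iso ⟨m, hm⟩ := by
      apply Subtype.ext
      simpa using ht
    rw [heq, OrderIso.symm_apply_apply]
  -- new positions
  set pp : V × Bool → ℝ := fun t => (π / n) * R t with hpp
  have ppNN : (π / n) * N = 2 * π := by
    rw [hN]; push_cast; field_simp
  have pp_mem : ∀ t, 0 ≤ pp t ∧ pp t < 2*π := by
    intro t
    constructor
    · positivity
    · rw [hpp]
      dsimp only
      rw [← ppNN]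
      have : (R t : ℝ) < N := by exact_mod_cast Rlt t
      have hd : 0 < π / n := by positivity
      nlinarith
  have ppmono : ∀ t t', c t < c t' ↔ pp t < pp t' := by
    intro t t'
    rw [Rmono, hpp]
    dsimp only
    constructor
    · intro h
      have : (R t : ℝ) < R t' := by exact_mod_cast h
      have hd : 0 < π / n := by positivity
      nlinarith
    · intro h
      have hd : 0 < π / n := by positivity
      have : (R t : ℝ) < R t' := by
        by_contra hle
        push_neg at hle
        nlinarith
      exact_mod_cast this
  have pp_inj : ∀ t t', pp t = pp t' → t = t' := by
    intro t t' h
    apply Rinj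
    have hd : (0:ℝ) < π / n := by positivity
    rw [hpp] at h
    dsimp only at h
    have h2 : (R t : ℝ) = R t' := mul_left_cancel₀ (ne_of_gt hd) h
    exact_mod_cast h2
  set DR : V × Bool → V × Bool → ℕ := fun t t' => if R t ≤ R t' then R t' - R t else R t' + N - R t
    with hDR
  have key : ∀ t t', dd (pp t) (pp t') = (π / n) * DR t t' := by
    intro t t'
    have h1 := Rlt t; have h2 := Rlt t'
    have hd : (0:ℝ) < π / n := by positivity
    have hm1 := pp_mem t; have hm2 := pp_mem t'
    rw [hDR]
    dsimp only
    split_ifs with h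
    · have hRle : (R t :ℝ) ≤ R t' := by exact_mod_cast h
      have hple : pp t ≤ pp t' := by
        rw [hpp]; dsimp only; nlinarith
      rw [dd_eq_self (by linarith) (by linarith [hm1.1, hm2.2])]
      rw [Nat.cast_sub h, hpp]
      dsimp only
      ring
    · push_neg at h
      have hRlt : (R t' :ℝ) < R t := by exact_mod_cast h
      have hplt : pp t' < pp t := by
        rw [hpp]; dsimp only; nlinarith
      rw [dd_eq_self' (by linarith [hm1.2, hm2.1]) (by linarith)]
      have hcast : ((R t' + N - R t : ℕ) : ℝ) = (R t' : ℝ) + N - R t := by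
        have hle : R t ≤ R t' + N := by omega
        rw [Nat.cast_sub hle]
        push_cast
        ring
      rw [hcast, hpp]
      dsimp only
      rw [← ppNN]
      ring
  -- the new representation
  set LL : V → ℝ := fun v => (π / n) * DR (v, false) (v, true) with hLL
  set f' : V → ℝ × ℝ := fun v => (pp (v, true), LL v) with hf'
  have tokTrue : ∀ v, tokPos f' (v, true) = pp (v, true) := fun v => rfl
  have tokFalse : ∀ v, tokPos f' (v, false) = pp (v, true) - LL v := fun v => rfl
  have DRpos : ∀ v, 0 < DR (v, false) (v, true) := by
    intro v
    have hne : R (v, false) ≠ R (v, true) := by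
      intro h
      exact Bool.false_ne_true (congrArg Prod.snd (Rinj _ _ h))
    have h1 := Rlt (v, false); have h2 := Rlt (v, true)
    rw [hDR]; dsimp only
    split_ifs with h <;> omega
  have DRltN : ∀ t t', t ≠ t' → DR t t' < N := by
    intro t t' hne
    have hne' : R t ≠ R t' := fun h => hne (Rinj _ _ h)
    have h1 := Rlt t; have h2 := Rlt t'
    rw [hDR]; dsimp only
    split_ifs with h <;> omega
  have hLL0 : ∀ v, 0 < LL v := by
    intro v
    rw [hLL]; dsimp only
    have := DRpos v
    have : (0:ℝ) < DR (v, false) (v, true) := by exact_mod_cast this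
    positivity
  have hLL2 : ∀ v, LL v < 2*π := by
    intro v
    rw [hLL]; dsimp only
    rw [← ppNN]
    have h := DRltN (v, false) (v, true) (by simp)
    have : (DR (v, false) (v, true) : ℝ) < N := by exact_mod_cast h
    have hd : 0 < π / n := by positivity
    nlinarith
  have hLLdd : ∀ v, LL v = dd (pp (v, false)) (pp (v, true)) := by
    intro v; rw [key]
  -- congruence of new bottom tokens
  have tokFalse_cong : ∀ v, ∃ k : ℤ, tokPos f' (v, false) - pp (v, false) = k * (2*π) := by
    intro v
    rw [tokFalse, hLLdd]
    obtain ⟨k, hk⟩ := dd_sub (pp (v, false)) (pp (v, true))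
    exact ⟨-k, by push_cast; linarith⟩
  have tok_cong : ∀ t, ∃ k : ℤ, tokPos f' t - pp t = k * (2*π) := by
    rintro ⟨v, b⟩
    cases b
    · exact tokFalse_cong v
    · exact ⟨0, by rw [tokTrue]; simp⟩
  -- distinctness for f'
  have hdist' : ∀ t t' : V × Bool, t ≠ t' → ∀ k : ℤ, tokPos f' t - tokPos f' t' ≠ k * (2*π) := by
    intro t t' hne k hk
    obtain ⟨a, ha⟩ := tok_cong t
    obtain ⟨b, hb⟩ := tok_cong t'
    have hppne : pp t ≠ pp t' := fun h => hne (pp_inj _ _ h)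
    have h1 := pp_mem t; have h2 := pp_mem t'
    refine not_cong_of_small hppne ?_ (k - a + b) (by push_cast; linarith)
    rw [abs_sub_lt_iff]; constructor <;> linarith [h1.1, h1.2, h2.1, h2.2]
  -- arc membership ↔ old, new
  have dd_old : ∀ t t', dd (tokPos f t) (tokPos f t') = dd (c t) (c t') :=
    fun t t' => ((dd_congr (c_sub t) (c_sub t'))).symm
  have len_old : ∀ v, (f v).2 = dd (tokPos f (v, false)) (tokPos f (v, true)) := by
    intro v
    have e : tokPos f (v, false) = (f v).1 - (f v).2 := rfl
    have e2 : tokPos f (v, true) = (f v).1 := rfl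
    have hd := dd_eq_self (y := (f v).1 - (f v).2) (z := (f v).1)
      (by linarith [(hlen v).1]) (by linarith [(hlen v).2])
    rw [e, e2, hd]
    ring
  -- the transfer
  have haux : ∀ u v : V, u ≠ v →
      ((dd (tokPos f (v,true)) (tokPos f (u,true)) ≤ (f u).2) ↔
        dd (pp (v,true)) (pp (u,true)) ≤ LL u) := by
    intro u v hne
    rw [len_old u, dd_old, dd_old, hLLdd u]
    have hES : (u, false) ≠ (u, true) := fun h => Bool.false_ne_true (congrArg Prod.snd h)
    have hES2 : (u, false) ≠ (v, true) := fun h => Bool.false_ne_true (congrArg Prod.snd h)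
    have hES3 : (v, true) ≠ (u, true) := fun h => hne ((congrArg Prod.fst h).symm)
    have c1 := c_mem (u,false); have c2 := c_mem (v,true); have c3 := c_mem (u,true)
    have p1 := pp_mem (u,false); have p2 := pp_mem (v,true); have p3 := pp_mem (u,true)
    refine dd_le_transfer c1.1 c1.2 c2.1 c2.2 c3.1 c3.2 p1.1 p1.2 p2.1 p2.2 p3.1 p3.2
      (fun h => hES2 (c_inj h)) (fun h => hES (c_inj h)) (fun h => hES3 (c_inj h))
      (ppmono _ _) (ppmono _ _) (ppmono _ _) (ppmono _ _) (ppmono _ _) (ppmono _ _)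
  -- adjacency for f'
  have hadj' : ∀ u v, u ≠ v →
      (G.Adj u v ↔ (arcSet (f' u).1 (f' u).2 ∩ arcSet (f' v).1 (f' v).2).Nonempty) := by
    intro u v hne
    rw [hadj u v hne,
      arcSet_inter_iff (le_of_lt (hlen u).1) (hlen u).2 (le_of_lt (hlen v).1) (hlen v).2,
      arcSet_inter_iff (le_of_lt (hLL0 u)) (hLL2 u) (le_of_lt (hLL0 v)) (hLL2 v)]
    have e1 : (f u).1 = tokPos f (u, true) := rfl
    have e2 : (f v).1 = tokPos f (v, true) := rfl
    have e3 : (f' u).1 = pp (u, true) := rfl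
    have e4 : (f' v).1 = pp (v, true) := rfl
    have e5 : (f' u).2 = LL u := rfl
    have e6 : (f' v).2 = LL v := rfl
    rw [e1, e2]
    exact or_congr (haux u v hne) (haux v u (Ne.symm hne))
  -- counting
  have count_bound : ∀ u : V, (DR (u, false) (u, true) : ℕ) + 1 ≤ 2 * ((G.neighborSet u).ncard + 1) := by
    intro u
    set r := DR (u, false) (u, true) with hr
    have hrN : r < N := DRltN _ _ (by simp)
    set Su : Finset (V × Bool) := Finset.univ.filter (fun x => DR x (u, true) ≤ r) with hSu
    -- card Su = r + 1
    have hDRinj : ∀ x y : V × Bool, DR x (u,true) = DR y (u,true) → x = y := by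
      intro x y hxy
      apply Rinj
      have h1 := Rlt x; have h2 := Rlt y; have h3 := Rlt (u, true)
      rw [hDR] at hxy
      dsimp only at hxy
      split_ifs at hxy <;> omega
    have hphi : ∀ d : ℕ, d ≤ r → ∃ x, DR x (u,true) = d := by
      intro d hd
      have h3 := Rlt (u, true)
      by_cases hcase : d ≤ R (u, true)
      · obtain ⟨x, hx⟩ := Rsurj (R (u, true) - d) (by omega)
        refine ⟨x, ?_⟩
        rw [hDR]
        dsimp only
        rw [hx, if_pos (by omega)]
        omega
      · obtain ⟨x, hx⟩ := Rsurj (R (u, true) + N - d) (by omega)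
        refine ⟨x, ?_⟩
        have h3 := Rlt (u, true)
        rw [hDR]
        dsimp only
        rw [hx, if_neg (by omega)]
        omega
    have hcardSu : Su.card = r + 1 := by
      have : Su.card = (Finset.range (r+1)).card := by
        refine Finset.card_bij' (fun x _ => DR x (u, true))
          (fun d hd => Classical.choose (hphi d (by
            have := Finset.mem_range.1 hd; omega)))
          ?_ ?_ ?_ ?_
        · intro x hx
          rw [hSu, Finset.mem_filter] at hx
          have hx2 := hx.2
          try dsimp only
          rw [Finset.mem_range]
          omega
        · intro d hd
          have hspec := Classical.choose_spec (hphi d (by have := Finset.mem_range.1 hd; omega))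
          rw [hSu, Finset.mem_filter]
          exact ⟨Finset.mem_univ _, by rw [hspec]; have := Finset.mem_range.1 hd; omega⟩
        · intro x hx
          rw [hSu, Finset.mem_filter] at hx
          exact hDRinj _ _ (Classical.choose_spec (hphi (DR x (u,true)) hx.2))
        · intro d hd
          exact Classical.choose_spec (hphi d (by have := Finset.mem_range.1 hd; omega))
      rw [this, Finset.card_range]
    -- Su included in neighbors
    have hSub : Su ⊆ (insert u (G.neighborFinset u)) ×ˢ (Finset.univ : Finset Bool) := by
      intro x hx
      rw [hSu, Finset.mem_filter] at hx
      obtain ⟨-, hxr⟩ := hx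
      rw [Finset.mem_product]
      refine ⟨?_, Finset.mem_univ _⟩
      rw [Finset.mem_insert]
      by_cases hxu : x.1 = u
      · exact Or.inl hxu
      · right
        rw [SimpleGraph.mem_neighborFinset]
        have harc : (arcSet (f' u).1 (f' u).2 ∩ arcSet (f' x.1).1 (f' x.1).2).Nonempty := by
          refine ⟨((pp x : ℝ) : Circle2pi), ?_, ?_⟩
          · have hgoal : dd (pp x) (pp (u, true)) ≤ LL u := by
              rw [key, hLL]
              dsimp only
              have hd : (0:ℝ) ≤ π / n := by positivity
              have hcc : (DR x (u, true) : ℝ) ≤ (DR (u, false) (u, true) : ℝ) := by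
                exact_mod_cast hxr
              exact mul_le_mul_of_nonneg_left hcc hd
            exact (mem_arcSet_iff (le_of_lt (hLL0 u)) (hLL2 u) (pp x)).2 hgoal
          · have hgoal : dd (pp x) (pp (x.1, true)) ≤ LL x.1 := by
              rcases x with ⟨w, b⟩
              cases b
              · exact le_of_eq (hLLdd w).symm
              · have hz : dd (pp (w, true)) (pp (w, true)) = 0 := by
                  have := dd_eq_self (y := pp (w, true)) (z := pp (w, true))
                    (by linarith) (by linarith [Real.two_pi_pos])
                  simpa using this
                dsimp only
                rw [hz]
                exact le_of_lt (hLL0 w)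
            exact (mem_arcSet_iff (le_of_lt (hLL0 x.1)) (hLL2 x.1) (pp x)).2 hgoal
        exact (hadj' u x.1 (Ne.symm hxu)).2 harc
    have hcard2 : Su.card ≤ ((G.neighborSet u).ncard + 1) * 2 := by
      calc Su.card ≤ ((insert u (G.neighborFinset u)) ×ˢ (Finset.univ : Finset Bool)).card :=
            Finset.card_le_card hSub
        _ = (insert u (G.neighborFinset u)).card * 2 := by
            rw [Finset.card_product]
            simp
        _ ≤ ((G.neighborFinset u).card + 1) * 2 := by
            have := Finset.card_insert_le u (G.neighborFinset u)
            omega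
        _ = ((G.neighborSet u).ncard + 1) * 2 := by
            have : (G.neighborFinset u).card = (G.neighborSet u).ncard := by
              rw [← Nat.card_coe_set_eq, Nat.card_eq_fintype_card,
                SimpleGraph.card_neighborSet_eq_degree]
              rfl
            rw [this]
    omega
  refine ⟨f', ⟨⟨fun v => ⟨hLL0 v, hLL2 v⟩, hadj'⟩, hdist'⟩, ?_⟩
  intro v
  have hb := count_bound v
  have e5 : (f' v).2 = LL v := rfl
  rw [e5, hLL]
  dsimp only
  have hd : 0 ≤ π / n := by positivity
  have : (DR (v, false) (v, true) : ℝ) ≤ 2 * (G.neighborSet v).ncard + 1 := by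
    have : DR (v, false) (v, true) ≤ 2 * (G.neighborSet v).ncard + 1 := by omega
    exact_mod_cast this
  rw [hn]
  exact mul_le_mul_of_nonneg_left this hd

lemma cos_small {w d : ℝ} (hd0 : 0 < d) (hdpi : d < π) (hw : |w| < d) : Real.cos d < Real.cos w := by
  rw [← Real.cos_abs w]
  exact Real.cos_lt_cos_of_nonneg_of_le_pi (abs_nonneg w) (le_of_lt hdpi) hw

lemma cos_big {w d : ℝ} (hd0 : 0 < d) (hdpi : d < π) (hw1 : d < w) (hw2 : w < 2*π - d) :
    Real.cos w < Real.cos d := by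
  rcases le_or_gt w π with h | h
  · exact Real.cos_lt_cos_of_nonneg_of_le_pi (le_of_lt hd0) h hw1
  · have he : Real.cos w = Real.cos (2*π - w) := by
      have := Real.cos_int_mul_two_pi_sub w 1
      push_cast at this
      rw [← this]
      norm_num
    rw [he]
    exact Real.cos_lt_cos_of_nonneg_of_le_pi (le_of_lt hd0) (by linarith) (by linarith)

set_option maxHeartbeats 2000000 in
lemma separation {su lu sv lv : ℝ} {α : ℕ} (hα : 2 ≤ α)
    (hu0 : 0 < lu) (hu2 : lu < 2*π) (hv0 : 0 < lv) (hv2 : lv < 2*π)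
    (h1 : lu < dd (su - lu) (sv - lv))
    (h2 : lv < dd (sv - lv) (su - lu))
    (hsum : lu + lv < 2*π - 2*π/α) :
    ∃ i : Fin α, ∀ t t' : ℝ, t ∈ Icc 0 lu → t' ∈ Icc 0 lv →
      Real.cos (su - t - π * (i:ℕ) / α) ≠ Real.cos (sv - t' - π * (i:ℕ) / α) := by
  have pi_pos := Real.pi_pos
  have hαR : (0:ℝ) < α := by positivity
  have hDnz : dd (su - lu) (sv - lv) ≠ 0 := by intro h; rw [h] at h1; linarith
  have hanti := dd_antisymm hDnz
  have hDpos : lu < dd (su - lu) (sv - lv) := h1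
  have hD2 : dd (su - lu) (sv - lv) < 2*π - lv := by linarith
  set D := dd (su - lu) (sv - lv) with hD
  set Eu : ℝ := su - lu with hEu
  set Ev : ℝ := Eu + D with hEv
  set Sv : ℝ := Ev + lv with hSv
  have hSu_lt : su < Ev := by rw [hEv, hEu]; linarith
  have hSv_lt : Sv < Eu + 2*π := by rw [hSv, hEv]; linarith
  obtain ⟨kc, hkc⟩ := dd_sub (su - lu) (sv - lv)
  have hEvcong : Ev = (sv - lv) + kc * (2*π) := by rw [hEv, hD, hkc, hEu]; ring
  -- choose the direction
  obtain ⟨kk, hσ1, hσ2⟩ : ∃ kk : ℤ, su + Sv < 2*π*kk/α ∧ 2*π*kk/α ≤ su + Sv + 2*π/α := by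
    set x : ℝ := (su + Sv) * α / (2*π) with hx
    have hxid : 2*π*x/α = su + Sv := by rw [hx]; field_simp
    refine ⟨⌊x⌋ + 1, ?_, ?_⟩
    · have h := Int.lt_floor_add_one x
      have h2 : 2*π*x/α < 2*π*((⌊x⌋:ℝ)+1)/α := by
        rw [div_lt_div_iff_of_pos_right hαR]
        nlinarith
      rw [hxid] at h2
      push_cast
      exact h2
    · have h := Int.floor_le x
      have h2 : 2*π*((⌊x⌋:ℝ)+1)/α ≤ 2*π*(x+1)/α := by
        rw [div_le_div_iff_of_pos_right hαR]
        nlinarith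
      have h3 : 2*π*(x+1)/α = 2*π*x/α + 2*π/α := by ring
      rw [h3, hxid] at h2
      push_cast
      exact h2
  set σ : ℝ := 2*π*kk/α with hσ
  have hσ3 : σ < Ev + Eu + 2*π := by
    have hstep : 2*π/α < 2*π - lu - lv := by linarith
    have : su + Sv + 2*π/α < Ev + Eu + 2*π := by
      rw [hSv, hEu]
      linarith
    linarith
  -- the separating chord
  set lo : ℝ := max su (σ - (Eu + 2*π)) with hlo
  set hi : ℝ := min Ev (σ - Sv) with hhi
  have hlohi : lo < hi := by
    rw [hlo, hhi]
    exact max_lt (lt_min hSu_lt (by linarith)) (lt_min (by linarith) (by linarith))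
  set g1 : ℝ := (lo + hi)/2 with hg1
  set g2 : ℝ := σ - g1 with hg2
  have hlo1 : su ≤ lo := le_max_left _ _
  have hlo2 : σ - (Eu + 2*π) ≤ lo := le_max_right _ _
  have hhi1 : hi ≤ Ev := min_le_left _ _
  have hhi2 : hi ≤ σ - Sv := min_le_right _ _
  have hg1a : su < g1 := by rw [hg1]; linarith
  have hg1b : g1 < Ev := by rw [hg1]; linarith
  have hg2a : Sv < g2 := by rw [hg2, hg1]; linarith
  have hg2b : g2 < Eu + 2*π := by rw [hg2, hg1]; linarith
  set d : ℝ := (g2 - g1)/2 with hd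
  have hEuSu : Eu < su := by rw [hEu]; linarith
  have hEvSv : Ev ≤ Sv := by rw [hSv]; linarith
  have hd0 : 0 < d := by rw [hd]; linarith
  have hdpi : d < π := by rw [hd]; linarith
  set θr : ℝ := σ/2 with hθr
  have hgsum : g1 + g2 = σ := by rw [hg2]; ring
  have hg2d : g2 - θr = d := by rw [hθr, hd]; linarith
  have hg1d : g1 - θr = -d := by rw [hθr, hd]; linarith
  -- index
  set q : ℤ := kk / α with hq
  have hαZ : (0:ℤ) < (α:ℤ) := by exact_mod_cast (by omega : 0 < α)
  have hmod0 : 0 ≤ kk % (α:ℤ) := Int.emod_nonneg kk (ne_of_gt hαZ)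
  have hmodlt : kk % (α:ℤ) < α := Int.emod_lt_of_pos kk hαZ
  set m : ℕ := (kk % (α:ℤ)).toNat with hm
  have hmcast : (m:ℤ) = kk % (α:ℤ) := Int.toNat_of_nonneg hmod0
  have hmlt : m < α := by omega
  refine ⟨⟨m, hmlt⟩, ?_⟩
  intro t t' ht ht' heq
  simp only [Fin.val_mk] at heq
  have hdivZ := Int.mul_ediv_add_emod kk (α:ℤ)
  have hdiv : (kk:ℝ) = α * (q:ℝ) + m := by
    rw [hq]
    have : ((α:ℤ) * (kk / (α:ℤ)) + kk % (α:ℤ) : ℤ) = kk := hdivZ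
    have h2 : ((α:ℤ):ℝ) * ((kk / (α:ℤ) : ℤ):ℝ) + ((kk % (α:ℤ) : ℤ):ℝ) = (kk:ℝ) := by
      exact_mod_cast congrArg (fun z : ℤ => (z:ℝ)) this
    push_cast at h2 ⊢
    rw [← hmcast] at h2
    push_cast at h2
    linarith
  have hmR : (m:ℝ) = (kk:ℝ) - α * q := by linarith
  have hθiq : π * (m:ℝ) / α = θr - π * q := by
    rw [hmR, hθr, hσ]
    field_simp
  -- cos computations
  have cos_add_int_pi : ∀ (z:ℝ) (mm:ℤ), Real.cos (z + mm*π) = (-1:ℝ)^mm * Real.cos z := by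
    intro z mm
    have h := Real.cos_int_mul_pi_sub (-z) mm
    rw [Real.cos_neg] at h
    rw [← h]
    ring_nf
  have hcu : Real.cos (su - t - π * (m:ℝ) / α) = (-1:ℝ)^q * Real.cos (su - t - θr) := by
    rw [hθiq, show su - t - (θr - π * q) = (su - t - θr) + q * π by ring, cos_add_int_pi]
  have hcv : Real.cos (sv - t' - π * (m:ℝ) / α) = (-1:ℝ)^q * Real.cos (Sv - t' - θr) := by
    have hsv' : sv - t' - (θr - π * q) = ((Sv - t' - θr) + q * π) + ((-kc : ℤ) : ℝ) * (2*π) := by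
      rw [hSv, hEvcong]
      push_cast
      ring
    rw [hθiq, hsv', Real.cos_add_int_mul_two_pi, cos_add_int_pi]
  -- bounds
  obtain ⟨ht0, ht1⟩ := ht
  obtain ⟨ht0', ht1'⟩ := ht'
  have hbv : Real.cos d < Real.cos (Sv - t' - θr) := by
    apply cos_small hd0 hdpi
    rw [abs_lt]
    constructor
    · have h5 : g1 < Sv - t' := by linarith
      linarith [hg1d]
    · have h5 : Sv - t' < g2 := by linarith
      linarith [hg2d]
  have hbu : Real.cos (su - t - θr) < Real.cos d := by
    have hcozu : Real.cos (su - t - θr) = Real.cos ((su - t - θr) + 2*π) := by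
      rw [show (su - t - θr) + 2*π = (su - t - θr) + (1:ℤ) * (2*π) by push_cast; ring,
        Real.cos_add_int_mul_two_pi]
    rw [hcozu]
    apply cos_big hd0 hdpi
    · have h5 : Eu ≤ su - t := by rw [hEu]; linarith
      linarith [hg2d]
    · have h5 : su - t < g1 := by linarith
      linarith [hg1d]
  have hne : ((-1:ℝ)^q) ≠ 0 := by
    apply zpow_ne_zero
    norm_num
  rw [hcu, hcv] at heq
  have := mul_left_cancel₀ hne heq
  linarith

set_option maxHeartbeats 1000000

/-- a circular arc graph on `n` vertices with maximum degree
`Δ < ⌊n(α−1)/(2α)⌋` (for an integer `α ≥ 2`) has boxicity at most `α`. -/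
theorem stmt12 {V : Type*} [Fintype V] (G : SimpleGraph V)
    (hrep : ∃ f : V → ℝ × ℝ, IsCARep G f) (α : ℕ) (hα : 2 ≤ α)
    (hΔ : ∀ v : V, (G.neighborSet v).ncard < Fintype.card V * (α - 1) / (2 * α)) :
    BoxicityLE G α := by
  classical
  rcases isEmpty_or_nonempty V with hV | hV
  · exact ⟨fun _ _ => Set.Icc 0 0, fun i v => isEmptyElim v, fun u v h => isEmptyElim u⟩
  · obtain ⟨f0, hf0⟩ := hrep
    obtain ⟨f1, hf1⟩ := phase1 G f0 hf0
    obtain ⟨f, hgood, hbound⟩ := phase2 G f1 hf1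
    obtain ⟨⟨hlen, hadj⟩, hdist⟩ := hgood
    set n := Fintype.card V with hn
    have hn0 : 0 < n := Fintype.card_pos
    have hnR : (0:ℝ) < n := by exact_mod_cast hn0
    have pi_pos := Real.pi_pos
    have hα0 : 0 < α := by omega
    have hαR : (0:ℝ) < α := by exact_mod_cast hα0
    set K := n * (α - 1) / (2 * α) with hK
    have hK1 : 1 ≤ K := by
      have := hΔ (Classical.arbitrary V)
      omega
    have hsum : ∀ u v : V, (f u).2 + (f v).2 < 2*π - 2*π/α := by
      intro u v
      have hu := hbound u; have hv := hbound v
      have hdu : (G.neighborSet u).ncard ≤ K - 1 := by have := hΔ u; omega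
      have hdv : (G.neighborSet v).ncard ≤ K - 1 := by have := hΔ v; omega
      have hcastu : ((G.neighborSet u).ncard : ℝ) ≤ (K:ℝ) - 1 := by
        have h2 : ((G.neighborSet u).ncard : ℝ) ≤ ((K - 1 : ℕ):ℝ) := by exact_mod_cast hdu
        rwa [Nat.cast_sub hK1, Nat.cast_one] at h2
      have hcastv : ((G.neighborSet v).ncard : ℝ) ≤ (K:ℝ) - 1 := by
        have h2 : ((G.neighborSet v).ncard : ℝ) ≤ ((K - 1 : ℕ):ℝ) := by exact_mod_cast hdv
        rwa [Nat.cast_sub hK1, Nat.cast_one] at h2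
      have hKb : (K:ℝ) ≤ (n:ℝ) * ((α:ℝ) - 1) / (2*(α:ℝ)) := by
        have h1 : ((K:ℕ):ℝ) ≤ ((n * (α - 1) : ℕ) : ℝ) / (((2 * α : ℕ)):ℝ) := by
          rw [hK]; exact Nat.cast_div_le
        push_cast [Nat.cast_sub (by omega : 1 ≤ α)] at h1
        exact h1
      have hpn : (0:ℝ) ≤ π / n := by positivity
      have e1 : (f u).2 + (f v).2 ≤ (π/n) * (4*(K:ℝ) - 2) := by
        have h3 : (2*((G.neighborSet u).ncard:ℝ)+1) + (2*((G.neighborSet v).ncard:ℝ)+1)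
            ≤ 4*(K:ℝ) - 2 := by linarith
        have h4 := add_le_add hu hv
        rw [hn] at h4
        nlinarith
      have e2 : 4*(K:ℝ) - 2 ≤ 2*(n:ℝ)*((α:ℝ)-1)/α - 2 := by
        have h5 : (n:ℝ) * ((α:ℝ) - 1) / (2*(α:ℝ)) * 4 = 2*(n:ℝ)*((α:ℝ)-1)/α := by
          field_simp
          ring
        nlinarith
      have e3 : (π/n)*(2*(n:ℝ)*((α:ℝ)-1)/α - 2) = 2*π - 2*π/α - 2*π/n := by
        field_simp
      have e4 : (π/n) * (4*(K:ℝ) - 2) ≤ (π/n)*(2*(n:ℝ)*((α:ℝ)-1)/α - 2) := by nlinarith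
      have e5 : (0:ℝ) < 2*π/n := by positivity
      linarith
    refine ⟨fun i v => (fun t => Real.cos ((f v).1 - t - π * (i:ℕ) / α)) '' Set.Icc 0 (f v).2,
      ?_, ?_⟩
    · intro i v
      have hab : (0:ℝ) ≤ (f v).2 := le_of_lt (hlen v).1
      have hcont : ContinuousOn (fun t : ℝ => Real.cos ((f v).1 - t - π * (i:ℕ)/α))
          (Set.Icc 0 (f v).2) := (Real.continuous_cos.comp (by continuity)).continuousOn
      have him := ContinuousOn.image_Icc hab hcont
      refine ⟨_, _, ?_, him⟩
      have hne : (Set.Icc (sInf ((fun t : ℝ => Real.cos ((f v).1 - t - π * (i:ℕ)/α)) '' Set.Icc 0 (f v).2))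
          (sSup ((fun t : ℝ => Real.cos ((f v).1 - t - π * (i:ℕ)/α)) '' Set.Icc 0 (f v).2))).Nonempty := by
        rw [← him]
        exact ⟨_, Set.mem_image_of_mem _ (Set.left_mem_Icc.2 hab)⟩
      exact Set.nonempty_Icc.1 hne
    · intro u v huv
      constructor
      · intro hA i
        obtain ⟨z, hz1, hz2⟩ := (hadj u v huv).1 hA
        obtain ⟨t, htm, htz⟩ := hz1
        obtain ⟨t', htm', htz'⟩ := hz2
        change ((((f u).1 - t : ℝ)) : Circle2pi) = z at htz
        change ((((f v).1 - t' : ℝ)) : Circle2pi) = z at htz'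
        rcases (circle_eq_iff _ _).1 (htz.trans htz'.symm) with ⟨k, hk⟩
        refine ⟨Real.cos ((f v).1 - t' - π * (i:ℕ)/α), ⟨t, htm, ?_⟩, ⟨t', htm', rfl⟩⟩
        show Real.cos ((f u).1 - t - π * (i:ℕ)/α) = _
        have he : (f u).1 - t - π*(i:ℕ)/α = ((f v).1 - t' - π*(i:ℕ)/α) + k * (2*π) := by
          linarith
        rw [he, Real.cos_add_int_mul_two_pi]
      · intro hI
        by_contra hnadj
        have hev_mem_v : dd ((f v).1 - (f v).2) (f v).1 = (f v).2 := by
          have h := dd_eq_self (y := (f v).1 - (f v).2) (z := (f v).1)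
            (by linarith [(hlen v).1]) (by linarith [(hlen v).2])
          rw [h]; ring
        have heu_mem_u : dd ((f u).1 - (f u).2) (f u).1 = (f u).2 := by
          have h := dd_eq_self (y := (f u).1 - (f u).2) (z := (f u).1)
            (by linarith [(hlen u).1]) (by linarith [(hlen u).2])
          rw [h]; ring
        have h1'' : (f u).2 < dd ((f v).1 - (f v).2) (f u).1 := by
          by_contra hle
          push_neg at hle
          have hmemu := (mem_arcSet_iff (le_of_lt (hlen u).1) (hlen u).2 _).2 hle
          have hmemv := (mem_arcSet_iff (le_of_lt (hlen v).1) (hlen v).2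
            ((f v).1 - (f v).2)).2 (le_of_eq hev_mem_v)
          exact hnadj ((hadj u v huv).2 ⟨_, hmemu, hmemv⟩)
        have h2'' : (f v).2 < dd ((f u).1 - (f u).2) (f v).1 := by
          by_contra hle
          push_neg at hle
          have hmemv := (mem_arcSet_iff (le_of_lt (hlen v).1) (hlen v).2 _).2 hle
          have hmemu := (mem_arcSet_iff (le_of_lt (hlen u).1) (hlen u).2
            ((f u).1 - (f u).2)).2 (le_of_eq heu_mem_u)
          exact hnadj ((hadj u v huv).2 ⟨_, hmemu, hmemv⟩)
        have h1 : (f u).2 < dd ((f u).1 - (f u).2) ((f v).1 - (f v).2) := by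
          by_contra hle
          push_neg at hle
          have hstep := (dd_switch ((f u).1 - (f u).2) ((f v).1 - (f v).2) (f u).1).1
            (by rw [heu_mem_u]; exact hle)
          rw [heu_mem_u] at hstep
          linarith
        have h2 : (f v).2 < dd ((f v).1 - (f v).2) ((f u).1 - (f u).2) := by
          by_contra hle
          push_neg at hle
          have hstep := (dd_switch ((f v).1 - (f v).2) ((f u).1 - (f u).2) (f v).1).1
            (by rw [hev_mem_v]; exact hle)
          rw [hev_mem_v] at hstep
          linarith
        obtain ⟨i, hsep⟩ := separation hα (hlen u).1 (hlen u).2 (hlen v).1 (hlen v).2 h1 h2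
          (hsum u v)
        obtain ⟨z, ⟨t, htm, hte⟩, ⟨t', htm', hte'⟩⟩ := hI i
        exact hsep t t' htm htm' (hte.trans hte'.symm)


end Aux

end
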